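/- Let P be a topological space, F a Banach space over a valued field K, U ⊆ F open, and f : P × U → F continuous such that the family f_p := f(p,·) is a uniform family of contractions with constant θ ∈ [0,1). Then the set Q of all p ∈ P such that f_p has a fixed point x_p is open in P, and the map φ : Q → F, p ↦ x_p, is continuous. -/

import Mathlib

open Metric

/-- Key lemma: if `g` is a `θ`-contraction on the closed ball `B̄_r(c)` and
`‖g c - c‖ ≤ (1-θ) r`, then `g` has a fixed point in the closed ball. -/
lemma stmt17_key {F : Type*} [NormedAddCommGroup F] [CompleteSpace F]
    (g : F → F) (θ : ℝ) (hθ0 : 0 ≤ θ) (hθ1 : θ < 1) (c : F) (r : ℝ) (hr : 0 ≤ r)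
    (hcontr : ∀ x ∈ closedBall c r, ∀ y ∈ closedBall c r, ‖g x - g y‖ ≤ θ * ‖x - y‖)
    (hc : ‖g c - c‖ ≤ (1 - θ) * r) :
    ∃ x ∈ closedBall c r, g x = x := by
  have hcmem : c ∈ closedBall c r := mem_closedBall_self hr
  have hmaps : ∀ x ∈ closedBall c r, g x ∈ closedBall c r := by
    intro x hx
    have h1 : ‖g x - g c‖ ≤ θ * ‖x - c‖ := hcontr x hx c hcmem
    have hx' : ‖x - c‖ ≤ r := by
      simpa [dist_eq_norm] using hx
    have : ‖g x - c‖ ≤ θ * r + (1 - θ) * r := by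
      calc ‖g x - c‖ ≤ ‖g x - g c‖ + ‖g c - c‖ := norm_sub_le_norm_sub_add_norm_sub _ _ _
        _ ≤ θ * ‖x - c‖ + (1 - θ) * r := add_le_add h1 hc
        _ ≤ θ * r + (1 - θ) * r := by
            gcongr
    simpa [dist_eq_norm] using this.trans_eq (by ring)
  set s := closedBall c r with hs
  haveI : Nonempty s := ⟨⟨c, hcmem⟩⟩
  haveI : CompleteSpace s := (isClosed_closedBall : IsClosed (closedBall c r)).completeSpace_coe
  set g' : s → s := fun x => ⟨g x, hmaps x x.2⟩ with hg'
  have hK : ContractingWith ⟨θ, hθ0⟩ g' := by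
    constructor
    · exact_mod_cast hθ1
    · apply LipschitzWith.of_dist_le_mul
      intro x y
      have := hcontr x x.2 y y.2
      simp only [g', Subtype.dist_eq, dist_eq_norm]
      exact this
  set x := hK.fixedPoint g' with hxdef
  have hfix : g' x = x := hK.fixedPoint_isFixedPt
  refine ⟨(x : F), x.2, ?_⟩
  have := congrArg Subtype.val hfix
  simpa [g'] using this

theorem stmt17 {K F P : Type*} [NontriviallyNormedField K] [CompleteSpace K]
    [NormedAddCommGroup F] [NormedSpace K F] [CompleteSpace F] [TopologicalSpace P]
    (U : Set F) (hU : IsOpen U) (f : P → F → F)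
    (θ : ℝ) (hθ0 : 0 ≤ θ) (hθ1 : θ < 1)
    (hcont : ContinuousOn (fun q : P × F => f q.1 q.2) ((Set.univ : Set P) ×ˢ U))
    (hcontr : ∀ p : P, ∀ x ∈ U, ∀ y ∈ U, ‖f p x - f p y‖ ≤ θ * ‖x - y‖) :
    IsOpen {p : P | ∃ x ∈ U, f p x = x} ∧
    ∃ φ : P → F,
      (∀ p ∈ {p : P | ∃ x ∈ U, f p x = x}, φ p ∈ U ∧ f p (φ p) = φ p) ∧
      ContinuousOn φ {p : P | ∃ x ∈ U, f p x = x} := by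
  set Q := {p : P | ∃ x ∈ U, f p x = x} with hQ
  -- continuity of `q ↦ f q x` for fixed `x ∈ U`
  have hcv : ∀ x ∈ U, Continuous fun q : P => f q x := by
    intro x hx
    have h1 : Continuous fun q : P => (q, x) := by fun_prop
    have h2 : ∀ q : P, (q, x) ∈ (Set.univ : Set P) ×ˢ U := fun q => ⟨trivial, hx⟩
    rw [← continuousOn_univ]
    exact hcont.comp h1.continuousOn (fun q _ => h2 q)
  have hopen : IsOpen Q := by
    rw [isOpen_iff_mem_nhds]
    rintro p ⟨x, hxU, hfx⟩
    obtain ⟨ε, hε, hball⟩ := Metric.isOpen_iff.1 hU x hxU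
    set r := ε / 2 with hrdef
    have hr : 0 < r := by positivity
    have hbr : closedBall x r ⊆ U :=
      (closedBall_subset_ball (by linarith)).trans hball
    have hopen' : IsOpen {q : P | ‖f q x - x‖ < (1 - θ) * r} := by
      have : Continuous fun q : P => ‖f q x - x‖ := ((hcv x hxU).sub continuous_const).norm
      exact isOpen_lt this continuous_const
    have hpmem : p ∈ {q : P | ‖f q x - x‖ < (1 - θ) * r} := by
      simp only [Set.mem_setOf_eq, hfx, sub_self, norm_zero]
      have h1θ : 0 < 1 - θ := by linarith
      positivity
    filter_upwards [hopen'.mem_nhds hpmem] with q hq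
    obtain ⟨y, hy, hfy⟩ := stmt17_key (f q) θ hθ0 hθ1 x r hr.le
      (fun a ha b hb => hcontr q a (hbr ha) b (hbr hb)) hq.le
    exact ⟨y, hbr hy, hfy⟩
  refine ⟨hopen, ?_⟩
  classical
  set φ : P → F := fun p => if h : ∃ x ∈ U, f p x = x then h.choose else 0 with hφ
  have hφspec : ∀ p ∈ Q, φ p ∈ U ∧ f p (φ p) = φ p := by
    intro p hp
    have hp' : ∃ x ∈ U, f p x = x := hp
    simp only [hφ]
    rw [dif_pos hp']
    exact ⟨hp'.choose_spec.1, hp'.choose_spec.2⟩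
  refine ⟨φ, hφspec, ?_⟩
  intro p hp
  have hpU := (hφspec p hp).1
  have hpfix := (hφspec p hp).2
  rw [ContinuousWithinAt, tendsto_iff_dist_tendsto_zero]
  have hbound : ∀ q ∈ Q, dist (φ q) (φ p) ≤ (1 - θ)⁻¹ * ‖f q (φ p) - f p (φ p)‖ := by
    intro q hq
    have hqU := (hφspec q hq).1
    have hqfix := (hφspec q hq).2
    have h1 : ‖φ q - φ p‖ ≤ θ * ‖φ q - φ p‖ + ‖f q (φ p) - f p (φ p)‖ := by
      calc ‖φ q - φ p‖ = ‖f q (φ q) - f p (φ p)‖ := by rw [hqfix, hpfix]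
        _ ≤ ‖f q (φ q) - f q (φ p)‖ + ‖f q (φ p) - f p (φ p)‖ :=
            norm_sub_le_norm_sub_add_norm_sub _ _ _
        _ ≤ θ * ‖φ q - φ p‖ + ‖f q (φ p) - f p (φ p)‖ := by
            gcongr; exact hcontr q _ hqU _ hpU
    have h2 : (1 - θ) * ‖φ q - φ p‖ ≤ ‖f q (φ p) - f p (φ p)‖ := by linarith
    rw [dist_eq_norm]
    rw [inv_mul_eq_div, le_div_iff₀ (by linarith)]
    linarith [h2]
  have htend : Filter.Tendsto (fun q : P => (1 - θ)⁻¹ * ‖f q (φ p) - f p (φ p)‖)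
      (nhdsWithin p Q) (nhds 0) := by
    have : Filter.Tendsto (fun q : P => (1 - θ)⁻¹ * ‖f q (φ p) - f p (φ p)‖)
        (nhds p) (nhds ((1 - θ)⁻¹ * ‖f p (φ p) - f p (φ p)‖)) := by
      exact (Filter.Tendsto.const_mul _ (((hcv (φ p) hpU).sub continuous_const).norm.tendsto p))
    simpa using this.mono_left nhdsWithin_le_nhds
  refine squeeze_zero' ?_ ?_ htend
  · filter_upwards with q using dist_nonneg
  · filter_upwards [self_mem_nhdsWithin] with q hq using hbound q hq
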